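/- Every 2-connected graph in which every cycle is chordless (induced) has a vertex of degree 2. -/

import Mathlib

open SimpleGraph Finset

variable {V : Type*}

/-- `c` is a proper list coloring of `G` from lists `L`. -/
def IsLC (G : SimpleGraph V) (L : V → Finset ℕ) (c : V → ℕ) : Prop :=
  (∀ v, c v ∈ L v) ∧ ∀ ⦃u w⦄, G.Adj u w → c u ≠ c w

/-- `G` is uniquely `(f,t)`-list colorable. -/
def UniqFT (G : SimpleGraph V) [Fintype V] (f : V → ℕ) (t : ℕ) : Prop :=
  ∃ L : V → Finset ℕ, (∀ v, (L v).card = f v) ∧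
    (Finset.univ.biUnion L).card = t ∧ ∃! c, IsLC G L c

/-- `G` is uniquely `(k,t)`-list colorable. -/
def UniqKT (G : SimpleGraph V) [Fintype V] (k t : ℕ) : Prop :=
  UniqFT G (fun _ => k) t

/-- `G` is uniquely `k`-list colorable (no restriction on total number of colors). -/
def UniqK (G : SimpleGraph V) (k : ℕ) : Prop :=
  ∃ L : V → Finset ℕ, (∀ v, (L v).card = k) ∧ ∃! c, IsLC G L c

/-- The chromatic number as a natural number. -/
noncomputable def chrom (G : SimpleGraph V) : ℕ := sInf {n | G.Colorable n}

/-- A graph has no cut vertex: deleting any single vertex leaves it connected. -/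
def NoCutVtx {W : Type*} (H : SimpleGraph W) : Prop :=
  ∀ w : W, ((⊤ : H.Subgraph).deleteVerts {w}).coe.Connected

/-- `G` is 2-connected: at least 3 vertices and no cut vertex. -/
def TwoConn (G : SimpleGraph V) [Fintype V] : Prop :=
  3 ≤ Fintype.card V ∧ G.Connected ∧ NoCutVtx G

/-- `B` is (the vertex set of) a block of `G`: a maximal set inducing a
connected subgraph with no cut vertex. -/
def IsBlock (G : SimpleGraph V) (B : Finset V) : Prop :=
  (G.induce (↑B : Set V)).Connected ∧ NoCutVtx (G.induce (↑B : Set V)) ∧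
    ∀ B' : Finset V, B ⊆ B' → (G.induce (↑B' : Set V)).Connected →
      NoCutVtx (G.induce (↑B' : Set V)) → B' = B

/-- `H` is a theta graph `θ_{p,q,r}`: three internally disjoint paths of
lengths `p`, `q`, `r` between two common endpoints, covering all vertices
and edges of `H`. -/
def IsTheta {W : Type*} (H : SimpleGraph W) (p q r : ℕ) : Prop :=
  ∃ (u v : W) (P₁ P₂ P₃ : H.Walk u v),
    u ≠ v ∧ P₁.IsPath ∧ P₂.IsPath ∧ P₃.IsPath ∧
    P₁.length = p ∧ P₂.length = q ∧ P₃.length = r ∧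
    (∀ x, x ∈ P₁.support → x ∈ P₂.support → x = u ∨ x = v) ∧
    (∀ x, x ∈ P₁.support → x ∈ P₃.support → x = u ∨ x = v) ∧
    (∀ x, x ∈ P₂.support → x ∈ P₃.support → x = u ∨ x = v) ∧
    (∀ x, x ∈ P₁.support ∨ x ∈ P₂.support ∨ x ∈ P₃.support) ∧
    (∀ e ∈ H.edgeSet, e ∈ P₁.edges ∨ e ∈ P₂.edges ∨ e ∈ P₃.edges)

/-- `χ_u(G,k)`: the least `t` such that `G` is uniquely `(k,t)`-list colorable
(`0` if there is none, by convention of `sInf` on `ℕ`). -/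
noncomputable def chiU (G : SimpleGraph V) [Fintype V] (k : ℕ) : ℕ :=
  sInf {t | UniqKT G k t}

namespace StmtAux

variable {W : Type*} {G : SimpleGraph W}

lemma takeUntil_cons_of_ne [DecidableEq W] {v x w u : W} (r : G.Adj v x) (p : G.Walk x w)
    (h : u ∈ (SimpleGraph.Walk.cons r p).support) (hne : v ≠ u) (h' : u ∈ p.support) :
    (SimpleGraph.Walk.cons r p).takeUntil u h
      = SimpleGraph.Walk.cons r (p.takeUntil u h') := by
  rw [SimpleGraph.Walk.takeUntil, dif_neg hne]

lemma length_eq_zero_of_count [DecidableEq W] {u : W} (q : G.Walk u u) (h : q.support.count u = 1) :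
    q.length = 0 := by
  cases q with
  | nil => rfl
  | cons r p =>
    exfalso
    rw [SimpleGraph.Walk.support_cons, List.count_cons_self] at h
    have hu : u ∈ p.support := SimpleGraph.Walk.end_mem_support p
    have := List.count_pos_iff.mpr hu  -- maybe List.count_pos
    omega

lemma takeUntil_start_length [DecidableEq W] {u w : W} (p : G.Walk u w) (h : u ∈ p.support) :
    (p.takeUntil u h).length = 0 :=
  length_eq_zero_of_count _ (p.count_support_takeUntil_eq_one h)

lemma lt_length_takeUntil [DecidableEq W] :
    ∀ {u v : W} (p : G.Walk u v) {x y : W} (hx : x ∈ p.support) (hy : y ∈ p.support),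
      y ∉ (p.takeUntil x hx).support →
      (p.takeUntil x hx).length < (p.takeUntil y hy).length := by
  intro u v p
  induction p with
  | nil =>
    intro x y hx hy hns
    rw [SimpleGraph.Walk.mem_support_nil_iff] at hx hy
    subst hx; subst hy
    exact absurd (SimpleGraph.Walk.end_mem_support _) hns
  | cons r p ih =>
    intro x y hx hy hns
    rename_i a b c
    by_cases hax : a = x
    · subst hax
      have h0 : ((SimpleGraph.Walk.cons r p).takeUntil a hx).length = 0 :=
        takeUntil_start_length _ hx
      rw [h0]
      have hya : y ≠ a := by
        intro hya; subst hya
        exact hns (SimpleGraph.Walk.start_mem_support _)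
      rcases Nat.eq_zero_or_pos ((SimpleGraph.Walk.cons r p).takeUntil y hy).length with h1 | h1
      · exact absurd (SimpleGraph.Walk.eq_of_length_eq_zero h1) hya.symm
      · exact h1
    · have hx' : x ∈ p.support := by
        rcases List.mem_cons.mp (by simpa using hx) with h | h
        · exact absurd h.symm hax
        · exact h
      rw [takeUntil_cons_of_ne r p hx hax hx'] at hns ⊢
      have hya : y ≠ a := by
        intro hya; subst hya
        exact hns (SimpleGraph.Walk.start_mem_support _)
      have hy' : y ∈ p.support := by
        rcases List.mem_cons.mp (by simpa using hy) with h | h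
        · exact absurd h.symm hya.symm
        · exact h
      rw [takeUntil_cons_of_ne r p hy (fun h => hya h.symm) hy']
      simp only [SimpleGraph.Walk.support_cons, List.mem_cons, SimpleGraph.Walk.length_cons] at hns ⊢
      have : y ∉ (p.takeUntil x hx').support := fun h => hns (Or.inr h)
      exact Nat.succ_lt_succ (ih hx' hy' this)

lemma start_edge {u v x : W} {q : G.Walk u v} (hq : q.IsPath) (he : s(u, x) ∈ q.edges) :
    ∃ (h : G.Adj u x) (r : G.Walk x v), q = SimpleGraph.Walk.cons h r := by
  cases q with
  | nil => simp at he
  | cons r p =>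
    rename_i b
    rw [SimpleGraph.Walk.edges_cons, List.mem_cons] at he
    rcases he with he | he
    · have hxb : x = b := Sym2.congr_right.mp he
      subst hxb
      exact ⟨r, p, rfl⟩
    · exfalso
      have hu : u ∈ p.support := SimpleGraph.Walk.fst_mem_support_of_mem_edges p he
      exact ((SimpleGraph.Walk.cons_isPath_iff r p).mp hq).2 hu

lemma exists_adj_ne {W : Type*} [Fintype W] {G : SimpleGraph W}
    (hcut : NoCutVtx G) (hcard : 3 ≤ Fintype.card W) (v w : W) (hvw : v ≠ w) :
    ∃ x, G.Adj v x ∧ x ≠ w := by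
  classical
  have hconn := hcut w
  have hv : v ∈ ((⊤ : G.Subgraph).deleteVerts {w}).verts := by
    simp [SimpleGraph.Subgraph.deleteVerts_verts, hvw]
  obtain ⟨u, huv, huw⟩ : ∃ u : W, u ≠ v ∧ u ≠ w := by
    by_contra hcon
    push_neg at hcon
    have hsub : (Finset.univ : Finset W) ⊆ {v, w} := by
      intro a _
      by_cases hav : a = v
      · subst hav; simp
      · have := hcon a hav; subst this; simp

    have h1 := Finset.card_le_card hsub
    have h2 : ({v, w} : Finset W).card ≤ 2 := Finset.card_insert_le _ _ |>.trans (by simp)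
    rw [Finset.card_univ] at h1
    omega
  have hu : u ∈ ((⊤ : G.Subgraph).deleteVerts {w}).verts := by
    simp [SimpleGraph.Subgraph.deleteVerts_verts, huw]
  obtain ⟨p⟩ := hconn ⟨v, hv⟩ ⟨u, hu⟩
  cases p with
  | nil => exact absurd rfl huv.symm
  | cons hadj p' =>
    rename_i b
    rw [SimpleGraph.Subgraph.coe_adj] at hadj
    rw [SimpleGraph.Subgraph.deleteVerts_adj] at hadj
    refine ⟨b.val, by simpa using hadj.2.2.2.2, ?_⟩
    have := hadj.2.2.2.1
    simpa using this

end StmtAux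

open StmtAux

/-- A 2-connected graph in which every cycle is chordless has a
vertex of degree 2. -/
theorem stmt4 [Fintype V] (G : SimpleGraph V) (h2 : TwoConn G)
    (hchordless : ∀ (v : V) (w : G.Walk v v), w.IsCycle →
      ∀ a b, a ∈ w.support → b ∈ w.support → G.Adj a b → s(a, b) ∈ w.edges) :
    ∃ v, (G.neighborSet v).ncard = 2 := by
  classical
  by_contra hno
  push_neg at hno
  obtain ⟨hcard, hconn, hcut⟩ := h2
  -- every vertex has at least 3 neighbors
  have hdeg : ∀ v : V, 3 ≤ (G.neighborSet v).ncard := by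
    intro v
    obtain ⟨w, hw⟩ := Fintype.exists_ne_of_one_lt_card (by omega) v
    obtain ⟨x₁, hx₁, _⟩ := exists_adj_ne hcut hcard v w (fun h => hw h.symm)
    obtain ⟨x₂, hx₂, hne⟩ := exists_adj_ne hcut hcard v x₁ (G.ne_of_adj hx₁)
    have h2 : 1 < (G.neighborSet v).ncard := by
      rw [Set.one_lt_ncard (Set.toFinite _)]
      exact ⟨x₂, hx₂, x₁, hx₁, hne⟩
    have := hno v
    omega
  -- take a longest path
  have hVne : Nonempty V := Fintype.card_pos_iff.mp (by omega)
  obtain ⟨v₀⟩ := hVne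
  set S : Set ℕ := {n | ∃ (a b : V) (p : G.Walk a b), p.IsPath ∧ p.length = n} with hS
  have hSne : S.Nonempty := ⟨0, v₀, v₀, SimpleGraph.Walk.nil, by simp, rfl⟩
  have hSbdd : BddAbove S := by
    refine ⟨Fintype.card V, ?_⟩
    rintro n ⟨a, b, p, hp, rfl⟩
    exact hp.length_lt.le
  obtain ⟨u, v, p, hp, hlen⟩ := Nat.sSup_mem hSne hSbdd
  have hmax : ∀ (a b : V) (q : G.Walk a b), q.IsPath → q.length ≤ p.length := by
    intro a b q hq
    rw [hlen]
    exact le_csSup hSbdd ⟨a, b, q, hq, rfl⟩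
  -- all neighbors of u lie on p
  have hNsupp : ∀ x, G.Adj u x → x ∈ p.support := by
    intro x hx
    by_contra hxs
    have hcons : (SimpleGraph.Walk.cons hx.symm p).IsPath := hp.cons hxs
    have := hmax _ _ _ hcons
    simp [SimpleGraph.Walk.length_cons] at this
  set NF : Finset V := (G.neighborSet u).toFinite.toFinset with hNF
  have hmemNF : ∀ x, x ∈ NF ↔ G.Adj u x := by
    intro x; rw [hNF, Set.Finite.mem_toFinset]; rfl
  have hNF3 : 3 ≤ NF.card := by
    have := hdeg u
    rwa [Set.ncard_eq_toFinset_card _ (Set.toFinite _)] at this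
  -- choose the ear path q from u to a neighbor f containing all neighbors of u
  obtain ⟨f, q, hadj_uf, hq, hNq, hlq⟩ :
      ∃ (f : V) (q : G.Walk u f), G.Adj u f ∧ q.IsPath ∧
        (∀ x ∈ NF, x ∈ q.support) ∧ 3 ≤ q.length := by
    have hNFne : NF.Nonempty := Finset.card_pos.mp (by omega)
    set g : V → ℕ := fun x => if hx : x ∈ p.support then (p.takeUntil x hx).length else 0 with hg
    obtain ⟨f, hfN, hfmax⟩ := NF.exists_max_image g hNFne
    have hadj_uf : G.Adj u f := (hmemNF f).mp hfN
    have hfsupp : f ∈ p.support := hNsupp f hadj_uf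
    refine ⟨f, p.takeUntil f hfsupp, hadj_uf, hp.takeUntil hfsupp, ?_, ?_⟩
    · intro m hm
      by_contra hms
      have hmp : m ∈ p.support := hNsupp m ((hmemNF m).mp hm)
      have hlt := lt_length_takeUntil p hfsupp hmp hms
      have h1 : g f < g m := by
        rw [hg]
        simp only [dif_pos hfsupp, dif_pos hmp]
        exact hlt
      exact absurd (hfmax m hm) (not_le.mpr h1)
    · -- length at least 3
      have hsub : insert u NF ⊆ (p.takeUntil f hfsupp).support.toFinset := by
        intro x hx
        rcases Finset.mem_insert.mp hx with rfl | hx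
        · exact List.mem_toFinset.mpr (SimpleGraph.Walk.start_mem_support _)
        · -- need: every neighbor is in takeUntil support; same argument as above
          by_contra hms
          rw [List.mem_toFinset] at hms
          have hmp : x ∈ p.support := hNsupp x ((hmemNF x).mp hx)
          have hlt := lt_length_takeUntil p hfsupp hmp hms
          have h1 : g f < g x := by
            rw [hg]; simp only [dif_pos hfsupp, dif_pos hmp]; exact hlt
          exact absurd (hfmax x hx) (not_le.mpr h1)
      have huN : u ∉ NF := by
        intro h
        exact G.loopless.irrefl u ((hmemNF u).mp h)
      have hc4 : 4 ≤ (p.takeUntil f hfsupp).support.toFinset.card := by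
        have h1 := Finset.card_le_card hsub
        rw [Finset.card_insert_of_notMem huN] at h1
        omega
      have hnd : (p.takeUntil f hfsupp).support.Nodup := (hp.takeUntil hfsupp).support_nodup
      have h2 := List.toFinset_card_of_nodup hnd
      have h3 := (p.takeUntil f hfsupp).length_support
      omega
  clear hmax hlen hNsupp hp hS hSne hSbdd
  -- decompose q = cons _ r₀
  obtain ⟨w₀, hadj₀, r₀, hq₀⟩ :
      ∃ (w₀ : V) (h : G.Adj u w₀) (r : G.Walk w₀ f), q = SimpleGraph.Walk.cons h r := by
    cases q with
    | nil => simp at hlq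
    | cons h r => exact ⟨_, h, r, rfl⟩
  -- the edge (u,f) is not on q
  have hef : s(u, f) ∉ q.edges := by
    intro he
    obtain ⟨h', r, hqe⟩ := start_edge hq he
    rw [hqe] at hq
    have hpr : r.IsPath := ((SimpleGraph.Walk.cons_isPath_iff _ _).mp hq).1
    cases r with
    | nil => rw [hqe] at hlq; simp at hlq
    | cons h'' r' =>
      have := ((SimpleGraph.Walk.cons_isPath_iff _ _).mp hpr).2
      exact this (SimpleGraph.Walk.end_mem_support r')
  -- build the cycle
  set c : G.Walk u u := SimpleGraph.Walk.cons hadj_uf q.reverse with hc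
  have hcyc : c.IsCycle := by
    rw [hc]
    refine (SimpleGraph.Walk.cons_isCycle_iff _ _).mpr ⟨hq.reverse, ?_⟩
    rw [SimpleGraph.Walk.edges_reverse, List.mem_reverse]
    exact hef
  -- choose a neighbor m distinct from f and w₀
  obtain ⟨m, hm⟩ : (NF \ {f, w₀}).Nonempty := by
    apply Finset.card_pos.mp
    have h1 := Finset.le_card_sdiff ({f, w₀} : Finset V) NF
    have h2 : ({f, w₀} : Finset V).card ≤ 2 :=
      (Finset.card_insert_le _ _).trans (by simp)
    omega
  rw [Finset.mem_sdiff, Finset.mem_insert, Finset.mem_singleton] at hm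
  push_neg at hm
  obtain ⟨hmN, hmf, hmw₀⟩ := hm
  have hadj_um : G.Adj u m := (hmemNF m).mp hmN
  -- m is on the cycle
  have hmem_m : m ∈ c.support := by
    rw [hc, SimpleGraph.Walk.support_cons]
    refine List.mem_cons.mpr (Or.inr ?_)
    rw [SimpleGraph.Walk.support_reverse, List.mem_reverse]
    exact hNq m hmN
  have hchord := hchordless u c hcyc u m (SimpleGraph.Walk.start_mem_support c) hmem_m hadj_um
  rw [hc, SimpleGraph.Walk.edges_cons, List.mem_cons] at hchord
  rcases hchord with heq | hin
  · exact hmf (Sym2.congr_right.mp heq)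
  · rw [SimpleGraph.Walk.edges_reverse, List.mem_reverse] at hin
    obtain ⟨h', r, hqe⟩ := start_edge hq hin
    rw [hq₀] at hqe
    have : w₀ = m := by
      have hgv := congrArg (fun z => z.getVert 1) hqe
      simpa [SimpleGraph.Walk.getVert_cons] using hgv
    exact hmw₀ this.symm
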